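/- (Brauer) Let A be an n×n complex matrix with eigenvalues λ₁,…,λₙ (with multiplicity), and suppose Av = λₖ v for some eigenvector v and index k. Then for any q ∈ ℂⁿ, the matrix A + v qᵀ has eigenvalues λ₁,…,λ_{k−1}, λₖ + qᵀv, λ_{k+1},…,λₙ. -/

import Mathlib

open Matrix Polynomial


lemma det_add_vecMulVec' {n : Type*} [DecidableEq n] [Fintype n] {R : Type*} [CommRing R]
    (A : Matrix n n R) (u w : n → R) :
    (A + Matrix.vecMulVec u w).det = A.det + w ⬝ᵥ (A.adjugate *ᵥ u) := by
  classical
  have hrows : (A + Matrix.vecMulVec u w) =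
      Matrix.of ((fun i => u i • w) + (fun i => A i)) := by
    ext i j
    simp [Matrix.vecMulVec_apply, add_comm]
  have hzero : ∀ s : Finset n, 1 < s.card →
      Matrix.det (Matrix.of (s.piecewise (fun i => u i • w) (fun i => A i))) = 0 := by
    intro s hs
    obtain ⟨i, hi, j, hj, hij⟩ := Finset.one_lt_card.mp hs
    set B := Matrix.of (s.piecewise (fun i => u i • w) (fun i => A i)) with hB
    have hBi : B i = u i • w :=
      s.piecewise_eq_of_mem (fun i => u i • w) (fun i => A i) hi
    have hBj : B j = u j • w :=
      s.piecewise_eq_of_mem (fun i => u i • w) (fun i => A i) hj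
    have h1 : B.det = u i * (B.updateRow i w).det := by
      conv_lhs => rw [← Matrix.updateRow_eq_self B i, hBi]
      rw [Matrix.det_updateRow_smul]
    have h2 : (B.updateRow i w).det = u j * ((B.updateRow i w).updateRow j w).det := by
      conv_lhs => rw [← Matrix.updateRow_eq_self (B.updateRow i w) j,
        Matrix.updateRow_ne (Ne.symm hij), hBj]
      rw [Matrix.det_updateRow_smul]
    have h3 : ((B.updateRow i w).updateRow j w).det = 0 := by
      apply Matrix.det_zero_of_row_eq hij
      rw [Matrix.updateRow_ne hij, Matrix.updateRow_self, Matrix.updateRow_self]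
    rw [h1, h2, h3, mul_zero, mul_zero]
  have key := (Matrix.detRowAlternating : (n → R) [⋀^n]→ₗ[R] R).toMultilinearMap.map_add_univ
      (fun i => u i • w) (fun i => A i)
  have hdet : (A + Matrix.vecMulVec u w).det
      = ∑ s : Finset n, Matrix.det (Matrix.of (s.piecewise (fun i => u i • w) (fun i => A i))) := by
    rw [hrows]
    exact key
  rw [hdet]
  set T : Finset (Finset n) := insert ∅ (Finset.univ.image fun j => ({j} : Finset n)) with hT
  have hsum : ∑ s : Finset n, Matrix.det (Matrix.of (s.piecewise (fun i => u i • w) (fun i => A i)))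
      = ∑ s ∈ T, Matrix.det (Matrix.of (s.piecewise (fun i => u i • w) (fun i => A i))) := by
    refine (Finset.sum_subset (Finset.subset_univ T) ?_).symm
    intro s _ hs
    apply hzero
    rcases Finset.eq_empty_or_nonempty s with h | h
    · exact absurd (h ▸ Finset.mem_insert_self _ _) hs
    · rcases Nat.lt_or_ge 1 s.card with h1 | h1
      · exact h1
      · interval_cases h2 : s.card
        · simp [Finset.card_eq_zero] at h2; exact absurd (h2 ▸ Finset.mem_insert_self _ _) hs
        · obtain ⟨a, ha⟩ := Finset.card_eq_one.mp h2
          exact absurd (by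
            rw [hT]
            exact Finset.mem_insert_of_mem (Finset.mem_image.mpr ⟨a, Finset.mem_univ a, ha.symm⟩)) hs
  rw [hsum]
  have hempty : (∅ : Finset n) ∉ Finset.univ.image fun j => ({j} : Finset n) := by
    simp
  rw [hT, Finset.sum_insert hempty, Finset.sum_image (by intro a _ b _ h; exact Finset.singleton_injective h)]
  congr 1
  have hsingle : ∀ j : n, Matrix.of (({j} : Finset n).piecewise (fun i => u i • w) (fun i => A i))
        = A.updateRow j (u j • w) := by
    intro j
    funext a b
    by_cases h : a = j
    · subst h; simp [Finset.piecewise_eq_of_mem]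
    · simp [Finset.piecewise_eq_of_notMem, h, Matrix.updateRow_ne h]
  calc ∑ j, Matrix.det (Matrix.of (({j} : Finset n).piecewise (fun i => u i • w) (fun i => A i)))
      = ∑ j, u j * (A.updateRow j w).det := by
        refine Finset.sum_congr rfl fun j _ => ?_
        rw [hsingle j, Matrix.det_updateRow_smul]
    _ = ∑ j, u j * ((A.adjugate)ᵀ *ᵥ w) j := by
        refine Finset.sum_congr rfl fun j _ => ?_
        rw [← Matrix.cramer_transpose_apply, Matrix.cramer_eq_adjugate_mulVec,
          Matrix.adjugate_transpose]
    _ = u ⬝ᵥ ((A.adjugate)ᵀ *ᵥ w) := rfl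
    _ = w ⬝ᵥ (A.adjugate *ᵥ u) := by
        rw [Matrix.dotProduct_mulVec, Matrix.vecMul_transpose, dotProduct_comm]
theorem brauer (n : ℕ) (M : Matrix (Fin n) (Fin n) ℂ) (lam : Fin n → ℂ) (k : Fin n)
    (hchar : M.charpoly = ∏ i, (X - C (lam i)))
    (v : Fin n → ℂ) (hv : v ≠ 0) (he : M.mulVec v = lam k • v) (q : Fin n → ℂ) :
    (M + Matrix.vecMulVec v q).charpoly =
      (∏ i ∈ Finset.univ.erase k, (X - C (lam i))) *
        (X - C (lam k + dotProduct q v)) := by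
  classical
  set P := charmatrix M with hPdef
  have hcm : charmatrix (M + Matrix.vecMulVec v q)
      = P + Matrix.vecMulVec (fun i => -C (v i)) (fun j => C (q j)) := by
    ext i j : 2
    by_cases h : i = j
    · subst h
      simp [hPdef, charmatrix_apply_eq, Matrix.add_apply, Matrix.vecMulVec_apply, map_add, _root_.map_mul]
      ring
    · simp [hPdef, charmatrix_apply_ne _ _ _ h, Matrix.add_apply, Matrix.vecMulVec_apply, map_add,
        _root_.map_mul]
      ring
  have hPv : P *ᵥ (fun i => C (v i)) = (X - C (lam k)) • (fun i => C (v i)) := by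
    funext i
    have hM : ∑ j, M i j * v j = lam k * v i := by
      have := congrFun he i
      simpa [Matrix.mulVec, dotProduct] using this
    have lhs : (P *ᵥ fun i => C (v i)) i = X * C (v i) - C (lam k * v i) := by
      simp only [Matrix.mulVec, dotProduct, hPdef, charmatrix_apply,
        Matrix.diagonal_apply, sub_mul, ite_mul, zero_mul, Finset.sum_sub_distrib,
        Finset.sum_ite_eq, Finset.mem_univ, if_pos, ← _root_.map_mul, ← map_sum, hM]
    rw [lhs]
    simp only [Pi.smul_apply, smul_eq_mul, _root_.map_mul]
    ring
  have hadj : P.adjugate *ᵥ (fun i => C (v i))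
      = (∏ i ∈ Finset.univ.erase k, (X - C (lam i))) • (fun i => C (v i)) := by
    have h1 : (X - C (lam k)) • (P.adjugate *ᵥ fun i => C (v i))
        = (X - C (lam k)) •
          ((∏ i ∈ Finset.univ.erase k, (X - C (lam i))) • fun i => C (v i)) := by
      calc (X - C (lam k)) • (P.adjugate *ᵥ fun i => C (v i))
          = P.adjugate *ᵥ ((X - C (lam k)) • fun i => C (v i)) := by
            rw [Matrix.mulVec_smul]
        _ = P.adjugate *ᵥ (P *ᵥ fun i => C (v i)) := by rw [hPv]
        _ = (P.adjugate * P) *ᵥ (fun i => C (v i)) := by rw [Matrix.mulVec_mulVec]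
        _ = (M.charpoly • (1 : Matrix (Fin n) (Fin n) ℂ[X])) *ᵥ (fun i => C (v i)) := by
            rw [Matrix.adjugate_mul]; rfl
        _ = M.charpoly • (fun i => C (v i)) := by
            rw [Matrix.smul_mulVec, Matrix.one_mulVec]
        _ = ((X - C (lam k)) * ∏ i ∈ Finset.univ.erase k, (X - C (lam i))) •
              (fun i => C (v i)) := by
            rw [hchar, ← Finset.mul_prod_erase _ _ (Finset.mem_univ k)]
        _ = (X - C (lam k)) •
              ((∏ i ∈ Finset.univ.erase k, (X - C (lam i))) • fun i => C (v i)) := by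
            rw [← smul_smul]
    funext i
    have h2 := congrFun h1 i
    simp only [Pi.smul_apply, smul_eq_mul] at h2 ⊢
    exact mul_left_cancel₀ (X_sub_C_ne_zero (lam k)) h2
  have hdet := det_add_vecMulVec' P (fun i => -C (v i)) (fun j => C (q j))
  have hneg : (fun i => -C (v i)) = -(fun i => C (v i)) := by funext i; simp
  have hcp : (M + Matrix.vecMulVec v q).charpoly
      = M.charpoly - (fun j => C (q j)) ⬝ᵥ (P.adjugate *ᵥ fun i => C (v i)) := by
    rw [Matrix.charpoly, hcm, hdet, hneg, Matrix.mulVec_neg, dotProduct_neg,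
      ← sub_eq_add_neg]
    rfl
  have hdot : (fun j => C (q j)) ⬝ᵥ (P.adjugate *ᵥ fun i => C (v i))
      = (∏ i ∈ Finset.univ.erase k, (X - C (lam i))) * C (dotProduct q v) := by
    rw [hadj, dotProduct_smul, smul_eq_mul]
    congr 1
    simp [dotProduct, ← _root_.map_mul, ← map_sum]
  rw [hcp, hdot, hchar, ← Finset.mul_prod_erase _ _ (Finset.mem_univ k), map_add]
  ring
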